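/- Let m, n ≥ 0, E = 2m + n, U unitary on ℂ^E, T the block matrix [[0, e^{ikl},0],[e^{ikl},0,0],[0,0,0_n]] and T̃ the matrix obtained from T by replacing the lower-right 0_n block by the identity 1_n (k real, l_j > 0). Then every eigenvalue μ of UT with |μ| = 1 is semi-simple, i.e., its geometric multiplicity equals its algebraic multiplicity. -/

import Mathlib

open Matrix

/-- Index type for ℂ^E with E = 2m + n. -/
abbrev GraphIdx (m n : ℕ) := Fin m ⊕ (Fin m ⊕ Fin n)

/-- The matrix T(k;l): blocks [[0, e^{ikl}, 0],[e^{ikl}, 0, 0],[0,0,0]]. -/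
noncomputable def Tmat (m n : ℕ) (k : ℝ) (l : Fin m → ℝ) :
    Matrix (GraphIdx m n) (GraphIdx m n) ℂ :=
  Matrix.of fun i j =>
    match i, j with
    | Sum.inl a, Sum.inr (Sum.inl b) =>
        if a = b then Complex.exp (Complex.I * k * (l a : ℂ)) else 0
    | Sum.inr (Sum.inl a), Sum.inl b =>
        if a = b then Complex.exp (Complex.I * k * (l a : ℂ)) else 0
    | _, _ => 0

open Polynomial in
lemma aux_charpoly_mulVecLin {ι : Type*} [Fintype ι] [DecidableEq ι] (A : Matrix ι ι ℂ) :
    LinearMap.charpoly (A.mulVecLin) = A.charpoly := by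
  rw [← LinearMap.charpoly_toMatrix A.mulVecLin (Pi.basisFun ℂ ι),
    LinearMap.toMatrix_eq_toMatrix', ← Matrix.toLin'_apply', LinearMap.toMatrix'_toLin']

open Polynomial in
lemma aux_charpoly_sub_smul {ι : Type*} [Fintype ι] [DecidableEq ι] (A : Matrix ι ι ℂ) (μ : ℂ) :
    (A - μ • (1 : Matrix ι ι ℂ)).charpoly = A.charpoly.comp (X + C μ) := by
  let f : ℂ[X] →+* ℂ[X] := (aeval (X + C μ) : ℂ[X] →ₐ[ℂ] ℂ[X]).toRingHom
  have hmap : (charmatrix A).map f = charmatrix (A - μ • 1) := by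
    ext i j
    by_cases h : i = j
    · subst h
      simp [f, charmatrix_apply, Matrix.map_apply, Matrix.one_apply]
      ring
    · simp [f, charmatrix_apply, Matrix.map_apply, Matrix.one_apply, h,
        Matrix.diagonal_apply_ne _ h]
  rw [Matrix.charpoly, Matrix.charpoly, comp_eq_aeval, ← hmap]
  exact (RingHom.map_det f (charmatrix A)).symm

lemma aux_sum_sq_mulVec_unitary {ι : Type*} [Fintype ι] [DecidableEq ι] (U : Matrix ι ι ℂ)
    (hU : U ∈ Matrix.unitaryGroup ι ℂ) (y : ι → ℂ) :
    ∑ i, ‖(U *ᵥ y) i‖ ^ 2 = ∑ i, ‖y i‖ ^ 2 := by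
  have key : ∀ z : ι → ℂ, star z ⬝ᵥ z = ((∑ i, ‖z i‖ ^ 2 : ℝ) : ℂ) := by
    intro z
    have h : ∀ w : ℂ, (starRingEnd ℂ) w * w = ((‖w‖ ^ 2 : ℝ) : ℂ) := by
      intro w
      rw [mul_comm, Complex.mul_conj]
      norm_cast
      simp [Complex.normSq_eq_norm_sq]
    simp only [dotProduct, Pi.star_apply, Complex.star_def, h]
    push_cast
    ring
  have h1 : star (U *ᵥ y) ⬝ᵥ (U *ᵥ y) = star y ⬝ᵥ y := by
    rw [star_mulVec, dotProduct_mulVec, vecMul_vecMul, ← Matrix.star_eq_conjTranspose,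
      hU.1, vecMul_one]
  rw [key, key] at h1
  exact_mod_cast h1

lemma aux_sum_sq_T_le {m n : ℕ} (k : ℝ) (l : Fin m → ℝ) (x : GraphIdx m n → ℂ) :
    ∑ i, ‖(Tmat m n k l *ᵥ x) i‖ ^ 2 ≤ ∑ i, ‖x i‖ ^ 2 := by
  have habs : ∀ a : Fin m, ‖Complex.exp (Complex.I * k * (l a : ℂ))‖ = 1 := by
    intro a
    rw [Complex.norm_exp]
    have h0 : (Complex.I * k * (l a : ℂ)).re = 0 := by simp
    rw [h0, Real.exp_zero]
  have h1 : ∀ a : Fin m, (Tmat m n k l *ᵥ x) (Sum.inl a)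
      = Complex.exp (Complex.I * k * (l a : ℂ)) * x (Sum.inr (Sum.inl a)) := by
    intro a
    simp [Tmat, mulVec, dotProduct, Fintype.sum_sum_type, ite_mul]
  have h2 : ∀ a : Fin m, (Tmat m n k l *ᵥ x) (Sum.inr (Sum.inl a))
      = Complex.exp (Complex.I * k * (l a : ℂ)) * x (Sum.inl a) := by
    intro a
    simp [Tmat, mulVec, dotProduct, Fintype.sum_sum_type, ite_mul]
  have h3 : ∀ b : Fin n, (Tmat m n k l *ᵥ x) (Sum.inr (Sum.inr b)) = 0 := by
    intro b
    simp [Tmat, mulVec, dotProduct, Fintype.sum_sum_type]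
  rw [Fintype.sum_sum_type, Fintype.sum_sum_type, Fintype.sum_sum_type, Fintype.sum_sum_type]
  simp only [h1, h2, h3, norm_mul, habs, one_mul, norm_zero]
  have hnn : (0:ℝ) ≤ ∑ b : Fin n, ‖x (Sum.inr (Sum.inr b))‖ ^ 2 :=
    Finset.sum_nonneg fun _ _ => sq_nonneg _
  simp only [zero_pow, ne_eq, OfNat.ofNat_ne_zero, not_false_eq_true, Finset.sum_const_zero]
  linarith

lemma aux_pow_formula {ι : Type*} (f : Module.End ℂ (ι → ℂ)) (μ : ℂ)
    (w v : ι → ℂ) (hw : f w = μ • w + v) (hv : f v = μ • v) (N : ℕ) :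
    (f ^ (N + 1)) w = μ ^ (N + 1) • w + (((N : ℂ) + 1) * μ ^ N) • v := by
  induction N with
  | zero => simpa using hw
  | succ N ih =>
    rw [pow_succ', Module.End.mul_apply, ih, map_add, _root_.map_smul, _root_.map_smul, hw, hv]
    push_cast
    module

open Polynomial in
/-- Every eigenvalue μ of UT with |μ| = 1 is semi-simple: its geometric multiplicity
(dimension of the eigenspace) equals its algebraic multiplicity (root multiplicity
in the characteristic polynomial). -/
theorem stmt14 {m n : ℕ} (U : Matrix (GraphIdx m n) (GraphIdx m n) ℂ)
    (hU : U ∈ Matrix.unitaryGroup (GraphIdx m n) ℂ)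
    (k : ℝ) (l : Fin m → ℝ) (hl : ∀ i, 0 < l i) (μ : ℂ)
    (hμ : ‖μ‖ = 1)
    (heig : Module.End.HasEigenvalue (U * Tmat m n k l).mulVecLin μ) :
    Module.finrank ℂ ↥(Module.End.eigenspace (U * Tmat m n k l).mulVecLin μ) =
      Polynomial.rootMultiplicity μ (Matrix.charpoly (U * Tmat m n k l)) := by
  classical
  set A := U * Tmat m n k l with hA
  set f := A.mulVecLin with hf
  -- the Euclidean norm on the index space
  set L := (WithLp.linearEquiv 2 ℂ ((GraphIdx m n) → ℂ)).symm with hL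
  have hne : ∀ x : GraphIdx m n → ℂ,
      ‖L x‖ = Real.sqrt (∑ i, ‖x i‖ ^ 2) := by
    intro x
    exact EuclideanSpace.norm_eq (L x)
  -- contraction
  have hcontr : ∀ x : GraphIdx m n → ℂ, ‖L (f x)‖ ≤ ‖L x‖ := by
    intro x
    rw [hne, hne]
    apply Real.sqrt_le_sqrt
    have : f x = A *ᵥ x := rfl
    rw [this, hA, ← mulVec_mulVec, aux_sum_sq_mulVec_unitary U hU]
    exact aux_sum_sq_T_le k l x
  have hpow : ∀ (N : ℕ) (x : GraphIdx m n → ℂ), ‖L ((f ^ N) x)‖ ≤ ‖L x‖ := by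
    intro N
    induction N with
    | zero => intro x; simp
    | succ N ih =>
      intro x
      rw [pow_succ, Module.End.mul_apply]
      exact le_trans (ih _) (hcontr x)
  -- key semisimplicity step
  have key : ∀ w : GraphIdx m n → ℂ,
      (f - μ • 1) ((f - μ • 1) w) = 0 → (f - μ • 1) w = 0 := by
    intro w hww
    set v := (f - μ • 1) w with hv
    have hfv : f v = μ • v := by
      have := hww
      rw [LinearMap.sub_apply, LinearMap.smul_apply, Module.End.one_apply, sub_eq_zero] at this
      exact this
    have hfw : f w = μ • w + v := by
      rw [hv, LinearMap.sub_apply, LinearMap.smul_apply, Module.End.one_apply]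
      abel
    -- the bound
    have hbound : ∀ N : ℕ, ((N : ℝ) + 1) * ‖L v‖ ≤ 2 * ‖L w‖ := by
      intro N
      have hμn : ∀ j : ℕ, ‖μ ^ j‖ = 1 := by
        intro j
        rw [norm_pow, hμ, one_pow]
      have hcoef : ‖((N : ℂ) + 1) * μ ^ N‖ = (N : ℝ) + 1 := by
        rw [norm_mul, hμn, mul_one]
        norm_cast
      have heq : (((N : ℂ) + 1) * μ ^ N) • v = (f ^ (N + 1)) w - μ ^ (N + 1) • w := by
        rw [aux_pow_formula f μ w v hfw hfv N]; abel
      have h1 : ‖L ((((N : ℂ) + 1) * μ ^ N) • v)‖ ≤ 2 * ‖L w‖ := by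
        rw [heq, map_sub]
        calc ‖L ((f ^ (N + 1)) w) - L (μ ^ (N + 1) • w)‖
            ≤ ‖L ((f ^ (N + 1)) w)‖ + ‖L (μ ^ (N + 1) • w)‖ := norm_sub_le _ _
          _ ≤ ‖L w‖ + ‖L w‖ := by
              have hb : ‖L (μ ^ (N + 1) • w)‖ = ‖L w‖ := by
                rw [L.map_smul, norm_smul, hμn, one_mul]
              rw [hb]
              exact add_le_add (hpow _ _) le_rfl
          _ = 2 * ‖L w‖ := by ring
      rwa [L.map_smul, norm_smul, hcoef] at h1
    have hv0 : v = 0 := by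
      by_contra hvne
      have hLv : 0 < ‖L v‖ := by
        rw [norm_pos_iff]
        intro h
        exact hvne (by simpa using congrArg (WithLp.linearEquiv 2 ℂ ((GraphIdx m n) → ℂ)) h)
      obtain ⟨N, hN⟩ := exists_nat_gt (2 * ‖L w‖ / ‖L v‖)
      have := hbound N
      have h2 : (N : ℝ) + 1 ≤ 2 * ‖L w‖ / ‖L v‖ := by
        rw [le_div_iff₀ hLv]
        exact this
      linarith
    exact hv0
  -- maxGenEigenspace = eigenspace
  have hker : ∀ (K : ℕ) (x : GraphIdx m n → ℂ),
      ((f - μ • 1) ^ K) x = 0 → (f - μ • 1) x = 0 := by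
    intro K
    induction K with
    | zero => intro x hx; simp only [pow_zero, Module.End.one_apply] at hx; rw [hx, map_zero]
    | succ K ih =>
      intro x hx
      rw [pow_succ, Module.End.mul_apply] at hx
      exact key x (ih _ hx)
  have hminmax : Module.End.maxGenEigenspace f μ = Module.End.eigenspace f μ := by
    apply le_antisymm
    · intro x hx
      rw [Module.End.mem_maxGenEigenspace] at hx
      obtain ⟨K, hK⟩ := hx
      have h0 := hker K x hK
      rw [Module.End.mem_eigenspace_iff]
      rw [LinearMap.sub_apply, LinearMap.smul_apply, Module.End.one_apply, sub_eq_zero] at h0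
      exact h0
    · simpa using Module.End.genEigenspace_le_maximal f μ 1
  -- shifting the eigenvalue to zero
  have hEnd : (A - μ • (1 : Matrix (GraphIdx m n) (GraphIdx m n) ℂ)).mulVecLin
      = f - μ • (1 : Module.End ℂ (GraphIdx m n → ℂ)) := by
    apply LinearMap.ext
    intro x
    simp [Matrix.sub_mulVec, Matrix.smul_mulVec, Matrix.one_mulVec, hf]
  have hgen0 : Module.End.maxGenEigenspace ((A - μ • 1).mulVecLin) 0 = Module.End.maxGenEigenspace f μ := by
    rw [hEnd]
    ext x
    simp only [Module.End.mem_maxGenEigenspace, zero_smul, sub_zero]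
  calc Module.finrank ℂ ↥(Module.End.eigenspace f μ)
      = Module.finrank ℂ ↥(Module.End.maxGenEigenspace ((A - μ • 1).mulVecLin) 0) := by
        rw [hgen0, hminmax]
    _ = ((A - μ • 1).mulVecLin).charpoly.natTrailingDegree :=
        LinearMap.finrank_maxGenEigenspace_zero_eq _
    _ = (A - μ • 1).charpoly.natTrailingDegree := by rw [aux_charpoly_mulVecLin]
    _ = (A.charpoly.comp (X + C μ)).natTrailingDegree := by rw [aux_charpoly_sub_smul]
    _ = rootMultiplicity μ A.charpoly := rootMultiplicity_eq_natTrailingDegree.symm
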